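/- The binary code generated by the incidence matrix of the unit graph G(Z_6) is a [6, 5, 2] MDS code over F_2. -/

import Mathlib

open SimpleGraph Finset
open scoped Classical

/-- The unit graph of a commutative ring: distinct `x, y` adjacent iff `x + y` is a unit. -/
def unitGraphR (R : Type*) [CommRing R] : SimpleGraph R where
  Adj x y := x ≠ y ∧ IsUnit (x + y)
  symm := ⟨fun x y ⟨h1, h2⟩ => ⟨h1.symm, by rwa [add_comm]⟩⟩
  loopless := ⟨fun x ⟨h, _⟩ => h rfl⟩

/-- The unit graph of `ZMod n`. -/
def unitGraph (n : ℕ) : SimpleGraph (ZMod n) := unitGraphR (ZMod n)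

/-- The number of edges of `G` with one endpoint in `W` and the other outside `W`. -/
noncomputable def cutSize {V : Type*} [Fintype V] (G : SimpleGraph V) (W : Finset V) : ℕ :=
  (G.edgeFinset.filter (fun e => (∃ x ∈ e, x ∈ W) ∧ (∃ x ∈ e, x ∉ W))).card

/-- The edge-connectivity of `G`: minimum cut size over nonempty proper vertex subsets. -/
noncomputable def edgeConn {V : Type*} [Fintype V] (G : SimpleGraph V) : ℕ :=
  sInf {n | ∃ W : Finset V, W.Nonempty ∧ W ≠ Finset.univ ∧ n = cutSize G W}

/-- The incidence matrix of `G` over `F_2`, rows indexed by vertices, columns by edges. -/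
noncomputable def incMat {V : Type*} [Fintype V] (G : SimpleGraph V) :
    Matrix V G.edgeFinset (ZMod 2) :=
  fun v e => if v ∈ (e : Sym2 V) then 1 else 0

/-- The binary code generated by the rows of the incidence matrix of `G`. -/
noncomputable def rowCode {V : Type*} [Fintype V] (G : SimpleGraph V) :
    Submodule (ZMod 2) (G.edgeFinset → ZMod 2) :=
  Submodule.span (ZMod 2) (Set.range (incMat G))

/-- The minimum Hamming weight of a nonzero codeword of the incidence-matrix code of `G`. -/
noncomputable def minDist {V : Type*} [Fintype V] (G : SimpleGraph V) : ℕ :=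
  sInf {w | ∃ c ∈ rowCode G, c ≠ 0 ∧ w = hammingNorm c}

lemma isUnit_zmod6 (z : ZMod 6) : IsUnit z ↔ z = 1 ∨ z = 5 := by
  rw [isUnit_iff_exists_inv]; revert z; decide
lemma adj_iff (x y : ZMod 6) : (unitGraph 6).Adj x y ↔ x ≠ y ∧ (x + y = 1 ∨ x + y = 5) := by
  show (x ≠ y ∧ IsUnit (x + y)) ↔ _
  rw [isUnit_zmod6]
lemma edgeFinset_eq : (unitGraph 6).edgeFinset =
    {s(0,1), s(1,4), s(3,4), s(2,3), s(2,5), s(0,5)} := by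
  ext e
  induction e using Sym2.ind with
  | _ x y =>
    rw [mem_edgeFinset, mem_edgeSet, adj_iff]
    revert x y
    decide

def inc2 (v : ZMod 6) (e : (unitGraph 6).edgeFinset) : ZMod 2 :=
  if v ∈ (e : Sym2 (ZMod 6)) then 1 else 0

lemma incMat_eq : incMat (unitGraph 6) = inc2 := by
  funext v e
  unfold incMat inc2
  congr

lemma rowsum (v : ZMod 6) : ∑ e, incMat (unitGraph 6) v e = 0 := by
  rw [incMat_eq]
  show ∑ e : (unitGraph 6).edgeFinset, (if v ∈ (e : Sym2 (ZMod 6)) then (1:ZMod 2) else 0) = 0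
  rw [Finset.univ_eq_attach,
    Finset.sum_attach _ (fun e => if v ∈ e then (1:ZMod 2) else 0), edgeFinset_eq]
  revert v; decide

lemma norm_row (v : ZMod 6) : hammingNorm (incMat (unitGraph 6) v) = 2 := by
  rw [incMat_eq, hammingNorm, Finset.card_filter, Finset.univ_eq_attach]
  show ∑ e ∈ (unitGraph 6).edgeFinset.attach,
      (if (if v ∈ (e : Sym2 (ZMod 6)) then (1:ZMod 2) else 0) ≠ 0 then 1 else 0) = 2
  rw [Finset.sum_attach _ (fun e => if (if v ∈ e then (1:ZMod 2) else 0) ≠ 0 then 1 else 0),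
    edgeFinset_eq]
  revert v; decide

abbrev E6 : Type := (unitGraph 6).edgeFinset

def ea : E6 := ⟨s(0,1), by rw [edgeFinset_eq]; decide⟩
def eb : E6 := ⟨s(1,4), by rw [edgeFinset_eq]; decide⟩
def ec : E6 := ⟨s(3,4), by rw [edgeFinset_eq]; decide⟩
def ed : E6 := ⟨s(2,3), by rw [edgeFinset_eq]; decide⟩
def ef : E6 := ⟨s(2,5), by rw [edgeFinset_eq]; decide⟩
def eg : E6 := ⟨s(0,5), by rw [edgeFinset_eq]; decide⟩

lemma row0 : incMat (unitGraph 6) 0 = Pi.single ea 1 + Pi.single eg 1 := by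
  rw [incMat_eq]; funext e
  obtain ⟨e', he⟩ := e
  rw [edgeFinset_eq] at he
  fin_cases he <;> simp [inc2, ea, eb, ec, ed, ef, eg, Pi.single_apply, Subtype.ext_iff, Sym2.eq_iff, Sym2.mem_iff] <;> decide
lemma row1 : incMat (unitGraph 6) 1 = Pi.single ea 1 + Pi.single eb 1 := by
  rw [incMat_eq]; funext e
  obtain ⟨e', he⟩ := e
  rw [edgeFinset_eq] at he
  fin_cases he <;> simp [inc2, ea, eb, ec, ed, ef, eg, Pi.single_apply, Subtype.ext_iff, Sym2.eq_iff, Sym2.mem_iff] <;> decide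
lemma row4 : incMat (unitGraph 6) 4 = Pi.single eb 1 + Pi.single ec 1 := by
  rw [incMat_eq]; funext e
  obtain ⟨e', he⟩ := e
  rw [edgeFinset_eq] at he
  fin_cases he <;> simp [inc2, ea, eb, ec, ed, ef, eg, Pi.single_apply, Subtype.ext_iff, Sym2.eq_iff, Sym2.mem_iff] <;> decide
lemma row3 : incMat (unitGraph 6) 3 = Pi.single ec 1 + Pi.single ed 1 := by
  rw [incMat_eq]; funext e
  obtain ⟨e', he⟩ := e
  rw [edgeFinset_eq] at he
  fin_cases he <;> simp [inc2, ea, eb, ec, ed, ef, eg, Pi.single_apply, Subtype.ext_iff, Sym2.eq_iff, Sym2.mem_iff] <;> decide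
lemma row5 : incMat (unitGraph 6) 5 = Pi.single eg 1 + Pi.single ef 1 := by
  rw [incMat_eq]; funext e
  obtain ⟨e', he⟩ := e
  rw [edgeFinset_eq] at he
  fin_cases he <;> simp [inc2, ea, eb, ec, ed, ef, eg, Pi.single_apply, Subtype.ext_iff, Sym2.eq_iff, Sym2.mem_iff] <;> decide

noncomputable def sigma6 : ((unitGraph 6).edgeFinset → ZMod 2) →ₗ[ZMod 2] ZMod 2 where
  toFun c := ∑ e, c e
  map_add' x y := by simp [Finset.sum_add_distrib]
  map_smul' r x := by simp [Finset.mul_sum]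

lemma card_eq : (unitGraph 6).edgeFinset.card = 6 := by
  rw [edgeFinset_eq]; rfl

lemma rowCode_le_ker : rowCode (unitGraph 6) ≤ LinearMap.ker sigma6 := by
  rw [rowCode, Submodule.span_le]
  rintro _ ⟨v, rfl⟩
  exact rowsum v

lemma sigma_single (e : E6) : sigma6 (Pi.single e (1:ZMod 2)) = 1 := by
  show ∑ e' : E6, Pi.single e (1:ZMod 2) e' = 1
  rw [Finset.sum_pi_single']
  simp

lemma finrank_space : Module.finrank (ZMod 2) ((unitGraph 6).edgeFinset → ZMod 2) = 6 := by
  rw [Module.finrank_pi, Fintype.card_coe, card_eq]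

lemma finrank_ker : Module.finrank (ZMod 2) (LinearMap.ker sigma6) = 5 := by
  have hsurj : LinearMap.range sigma6 = ⊤ := by
    rw [LinearMap.range_eq_top]
    intro y
    exact ⟨y • Pi.single ea 1, by rw [map_smul, sigma_single, smul_eq_mul, mul_one]⟩
  have h := LinearMap.finrank_range_add_finrank_ker sigma6
  rw [hsurj, finrank_top, Module.finrank_self, finrank_space] at h
  omega

noncomputable def Scode : Submodule (ZMod 2) ((unitGraph 6).edgeFinset → ZMod 2) :=
  rowCode (unitGraph 6) ⊔ Submodule.span (ZMod 2) {Pi.single ea (1:ZMod 2)}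

lemma single_mem : ∀ e : E6, Pi.single e (1:ZMod 2) ∈ Scode := by
  have ha : Pi.single ea (1:ZMod 2) ∈ Scode :=
    Submodule.mem_sup_right (Submodule.subset_span rfl)
  have hrow : ∀ v, incMat (unitGraph 6) v ∈ Scode := fun v =>
    Submodule.mem_sup_left (Submodule.subset_span ⟨v, rfl⟩)
  have hb : Pi.single eb (1:ZMod 2) ∈ Scode := by
    have h : Pi.single eb (1:ZMod 2) = incMat (unitGraph 6) 1 - Pi.single ea 1 := by
      rw [row1]; abel
    rw [h]; exact sub_mem (hrow 1) ha
  have hg : Pi.single eg (1:ZMod 2) ∈ Scode := by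
    have h : Pi.single eg (1:ZMod 2) = incMat (unitGraph 6) 0 - Pi.single ea 1 := by
      rw [row0]; abel
    rw [h]; exact sub_mem (hrow 0) ha
  have hc : Pi.single ec (1:ZMod 2) ∈ Scode := by
    have h : Pi.single ec (1:ZMod 2) = incMat (unitGraph 6) 4 - Pi.single eb 1 := by
      rw [row4]; abel
    rw [h]; exact sub_mem (hrow 4) hb
  have hd : Pi.single ed (1:ZMod 2) ∈ Scode := by
    have h : Pi.single ed (1:ZMod 2) = incMat (unitGraph 6) 3 - Pi.single ec 1 := by
      rw [row3]; abel
    rw [h]; exact sub_mem (hrow 3) hc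
  have hf : Pi.single ef (1:ZMod 2) ∈ Scode := by
    have h : Pi.single ef (1:ZMod 2) = incMat (unitGraph 6) 5 - Pi.single eg 1 := by
      rw [row5]; abel
    rw [h]; exact sub_mem (hrow 5) hg
  rintro ⟨e', he⟩
  rw [edgeFinset_eq] at he
  fin_cases he
  · exact ha
  · exact hb
  · exact hc
  · exact hd
  · exact hf
  · exact hg

lemma Scode_top : Scode = ⊤ := by
  rw [eq_top_iff]
  intro x _
  rw [← Finset.univ_sum_single x]
  refine Submodule.sum_mem _ fun e _ => ?_
  have h : Pi.single e (x e) = x e • (Pi.single e 1 : E6 → ZMod 2) := by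
    funext j
    by_cases hj : j = e <;> simp [hj, Pi.single_apply]
  rw [h]
  exact Submodule.smul_mem _ _ (single_mem e)

lemma finrank_rowCode : Module.finrank (ZMod 2) (rowCode (unitGraph 6)) = 5 := by
  have hub : Module.finrank (ZMod 2) (rowCode (unitGraph 6)) ≤ 5 :=
    le_trans (Submodule.finrank_mono rowCode_le_ker) (le_of_eq finrank_ker)
  have hsingle_ne : (Pi.single ea 1 : E6 → ZMod 2) ≠ 0 := by
    intro h
    have := congrFun h ea
    rw [Pi.single_eq_same] at this
    exact one_ne_zero this
  have hspan : Module.finrank (ZMod 2)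
      (Submodule.span (ZMod 2) {(Pi.single ea 1 : E6 → ZMod 2)}) = 1 :=
    finrank_span_singleton hsingle_ne
  have hsup := Submodule.finrank_sup_add_finrank_inf_eq (rowCode (unitGraph 6))
    (Submodule.span (ZMod 2) {(Pi.single ea 1 : E6 → ZMod 2)})
  rw [← Scode, Scode_top, finrank_top, finrank_space, hspan] at hsup
  omega

lemma minDist_eq : minDist (unitGraph 6) = 2 := by
  have h2 : 2 ∈ {w | ∃ c ∈ rowCode (unitGraph 6), c ≠ 0 ∧ w = hammingNorm c} := by
    refine ⟨incMat (unitGraph 6) 0, Submodule.subset_span ⟨0, rfl⟩, ?_, (norm_row 0).symm⟩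
    intro h
    have h0 := congrFun h ea
    rw [row0] at h0
    simp (config := { decide := true }) [Pi.single_apply, ea, eg, Subtype.ext_iff, Sym2.eq_iff] at h0
  unfold minDist
  refine le_antisymm (Nat.sInf_le h2) (le_csInf ⟨2, h2⟩ ?_)
  rintro w ⟨c, hc, hne, rfl⟩
  by_contra hlt
  push_neg at hlt
  have h0 : hammingNorm c ≠ 0 := fun h => hne (hammingNorm_eq_zero.mp h)
  have h1 : hammingNorm c = 1 := by omega
  have hσ : ∑ e, c e = 0 := rowCode_le_ker hc
  rw [hammingNorm] at h1
  obtain ⟨e0, he0⟩ := Finset.card_eq_one.mp h1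
  have hmem : e0 ∈ Finset.univ.filter (fun e => c e ≠ 0) := he0 ▸ Finset.mem_singleton_self e0
  have hne0 : c e0 ≠ 0 := (Finset.mem_filter.mp hmem).2
  have hsum : ∑ e, c e = c e0 := by
    rw [← Finset.sum_filter_ne_zero Finset.univ, he0, Finset.sum_singleton]
  exact hne0 (hsum ▸ hσ)

theorem unitGraph_ZMod_six_code_MDS :
    (unitGraph 6).edgeFinset.card = 6 ∧
      Module.finrank (ZMod 2) (rowCode (unitGraph 6)) = 5 ∧
      minDist (unitGraph 6) = 2 ∧
      minDist (unitGraph 6) = (unitGraph 6).edgeFinset.card -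
        Module.finrank (ZMod 2) (rowCode (unitGraph 6)) + 1 := by
  refine ⟨card_eq, finrank_rowCode, minDist_eq, ?_⟩
  rw [card_eq, finrank_rowCode, minDist_eq]
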